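/- Suppose X is a nonnegative random variable with positive variance, X' is a nonnegative random variable independent of X with 0 < E X' < ∞, and the size-biased distribution of X equals the distribution of X + X'. Then the zero-biased distribution of X equals the distribution of X + X'', where X'' is independent of X with density f(x) = P(X' ≥ x)/E[X'] for x ≥ 0. -/

import Mathlib

open MeasureTheory ProbabilityTheory Real

noncomputable section

/-- `ν` is the size-biased distribution of `μ`: `E[V f(V)] = E[V] · E[f(V^s)]`
for all bounded measurable test functions `f`. -/
def IsSizeBiased (μ ν : Measure ℝ) : Prop :=
  ∀ f : ℝ → ℝ, Measurable f → (∀ x, |f x| ≤ 1) →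
    ∫ x, x * f x ∂μ = (∫ x, x ∂μ) * ∫ x, f x ∂ν

/-- `ν` is the zero-biased distribution of `μ`: `E[(W−μ) f(W)] = σ² · E[f'(W^z)]`
for all differentiable test functions `f` with bounded derivative. -/
def IsZeroBiased (μ ν : Measure ℝ) : Prop :=
  ∀ f : ℝ → ℝ, Differentiable ℝ f → (∀ x, |deriv f x| ≤ 1) →
    ∫ x, (x - ∫ y, y ∂μ) * f x ∂μ
      = (∫ x, (x - ∫ y, y ∂μ) ^ 2 ∂μ) * ∫ x, deriv f x ∂ν
section Aux
open Set
open scoped NNReal ENNReal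

lemma bdd_integrable {α} [MeasurableSpace α] {μ : Measure α} [IsFiniteMeasure μ] {f : α → ℝ}
    (hf : AEStronglyMeasurable f μ) {C : ℝ} (h : ∀ x, |f x| ≤ C) : Integrable f μ :=
  (integrable_const C).mono' hf (Filter.Eventually.of_forall (fun x => by
    simpa [Real.norm_eq_abs] using h x))

lemma integrable_comp_fst {μ ν : Measure ℝ} [SFinite μ] [IsProbabilityMeasure ν] {f : ℝ → ℝ}
    (hf : AEStronglyMeasurable f μ) (h : Integrable f μ) :
    Integrable (fun p : ℝ × ℝ => f p.1) (μ.prod ν) := by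
  have h1 : Measure.map Prod.fst (μ.prod ν) = μ := by
    rw [← Measure.fst]; exact Measure.fst_prod
  exact (integrable_map_measure (by rw [h1]; exact hf) measurable_fst.aemeasurable).mp
    (by rw [h1]; exact h)

lemma integrable_comp_snd {μ ν : Measure ℝ} [IsProbabilityMeasure μ] [SFinite ν] {f : ℝ → ℝ}
    (hf : AEStronglyMeasurable f ν) (h : Integrable f ν) :
    Integrable (fun p : ℝ × ℝ => f p.2) (μ.prod ν) := by
  have h1 : Measure.map Prod.snd (μ.prod ν) = ν := by
    rw [← Measure.snd]; exact Measure.snd_prod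
  exact (integrable_map_measure (by rw [h1]; exact hf) measurable_snd.aemeasurable).mp
    (by rw [h1]; exact h)

lemma integral_conv {μ ν : Measure ℝ} [SFinite μ] [SFinite ν] {f : ℝ → ℝ} (hf : Measurable f)
    (hint : Integrable (fun p : ℝ × ℝ => f (p.1 + p.2)) (μ.prod ν)) :
    ∫ x, f x ∂(μ.conv ν) = ∫ x, ∫ y, f (x + y) ∂ν ∂μ := by
  rw [Measure.conv, integral_map measurable_add.aemeasurable hf.aestronglyMeasurable]
  exact integral_prod _ hint

lemma integrable_conv' {μ ν : Measure ℝ} [SFinite μ] [SFinite ν] {f : ℝ → ℝ} (hf : Measurable f)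
    (hint : Integrable (fun p : ℝ × ℝ => f (p.1 + p.2)) (μ.prod ν)) :
    Integrable f (μ.conv ν) := by
  rw [Measure.conv]
  exact (integrable_map_measure hf.aestronglyMeasurable measurable_add.aemeasurable).mpr hint

def trunc (c y : ℝ) : ℝ := max (-c) (min y c)

lemma trunc_abs_le {c : ℝ} (hc : 0 ≤ c) (y : ℝ) : |trunc c y| ≤ |y| := by
  rw [abs_le]; constructor
  · exact le_max_of_le_right
      (le_min (neg_abs_le y) (le_trans (neg_nonpos_of_nonneg (abs_nonneg y)) hc))
  · exact max_le (le_trans (neg_nonpos_of_nonneg hc) (abs_nonneg y))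
      (le_trans (min_le_left _ _) (le_abs_self y))

lemma trunc_eq_of_abs_le {c y : ℝ} (h : |y| ≤ c) : trunc c y = y := by
  unfold trunc
  rw [abs_le] at h
  rw [min_eq_left h.2, max_eq_right h.1]

lemma trunc_tendsto (y : ℝ) :
    Filter.Tendsto (fun n : ℕ => trunc (n + 1) y) Filter.atTop (nhds y) := by
  apply Filter.Tendsto.congr' _ tendsto_const_nhds
  filter_upwards [Filter.eventually_ge_atTop ⌈|y|⌉₊] with n hn
  have h1 : (⌈|y|⌉₊ : ℝ) ≤ n := Nat.cast_le.mpr hn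
  exact (trunc_eq_of_abs_le (by linarith [Nat.le_ceil |y|])).symm

lemma trunc_measurable (c : ℝ) : Measurable (trunc c) :=
  measurable_const.max (measurable_id.min measurable_const)

lemma trunc_abs_le_const {c : ℝ} (hc : 0 ≤ c) (y : ℝ) : |trunc c y| ≤ c := by
  rw [abs_le]
  exact ⟨le_max_left _ _, max_le (by linarith) (min_le_right _ _)⟩

lemma sizeBiased_ext {μ ν : Measure ℝ} (hsb : IsSizeBiased μ ν) {f : ℝ → ℝ}
    (hf : Measurable f) (h1 : Integrable (fun x => x * f x) μ) (h2 : Integrable f ν) :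
    ∫ x, x * f x ∂μ = (∫ x, x ∂μ) * ∫ x, f x ∂ν := by
  have key : ∀ n : ℕ, ∫ x, x * trunc (n + 1) (f x) ∂μ
      = (∫ x, x ∂μ) * ∫ x, trunc (n + 1) (f x) ∂ν := by
    intro n
    have hpos : (0:ℝ) < n + 1 := by positivity
    have h := hsb (fun x => trunc (n + 1) (f x) / (n + 1))
      (((trunc_measurable _).comp hf).div_const _)
      (fun x => by
        rw [abs_div, abs_of_pos hpos, div_le_one hpos]
        exact trunc_abs_le_const hpos.le _)
    have e1 : ∀ x : ℝ, x * trunc (n+1) (f x) = (n+1) * (x * (trunc (n+1) (f x) / (n+1))) :=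
      fun x => by field_simp
    have e2 : ∀ t : ℝ, (n+1:ℝ) * (t / (n+1)) = t := fun t => by field_simp
    calc ∫ x, x * trunc (n + 1) (f x) ∂μ
        = ∫ x, (n+1) * (x * (trunc (n + 1) (f x) / (n+1))) ∂μ := by simp only [e1]
      _ = (n+1) * ∫ x, x * (trunc (n + 1) (f x) / (n+1)) ∂μ := integral_const_mul _ _
      _ = (n+1) * ((∫ x, x ∂μ) * ∫ x, trunc (n + 1) (f x) / (n+1) ∂ν) := by rw [h]
      _ = (∫ x, x ∂μ) * ((n+1) * ∫ x, trunc (n + 1) (f x) / (n+1) ∂ν) := by ring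
      _ = (∫ x, x ∂μ) * ∫ x, (n+1) * (trunc (n + 1) (f x) / (n+1)) ∂ν := by
          rw [integral_const_mul]
      _ = (∫ x, x ∂μ) * ∫ x, trunc (n + 1) (f x) ∂ν := by simp only [e2]
  have lim1 : Filter.Tendsto (fun n : ℕ => ∫ x, x * trunc (n + 1) (f x) ∂μ)
      Filter.atTop (nhds (∫ x, x * f x ∂μ)) := by
    apply tendsto_integral_of_dominated_convergence (fun x => |x * f x|)
    · exact fun n => ((measurable_id.mul ((trunc_measurable _).comp hf))).aestronglyMeasurable
    · exact h1.abs
    · intro n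
      filter_upwards with x
      rw [Real.norm_eq_abs, abs_mul, abs_mul]
      exact mul_le_mul_of_nonneg_left (trunc_abs_le (by positivity) _) (abs_nonneg x)
    · filter_upwards with x
      exact (trunc_tendsto (f x)).const_mul x
  have lim2 : Filter.Tendsto (fun n : ℕ => (∫ x, x ∂μ) * ∫ x, trunc (n + 1) (f x) ∂ν)
      Filter.atTop (nhds ((∫ x, x ∂μ) * ∫ x, f x ∂ν)) := by
    apply Filter.Tendsto.const_mul
    apply tendsto_integral_of_dominated_convergence (fun x => |f x|)
    · exact fun n => ((trunc_measurable _).comp hf).aestronglyMeasurable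
    · exact h2.abs
    · intro n
      filter_upwards with x
      rw [Real.norm_eq_abs]
      exact trunc_abs_le (by positivity) _
    · filter_upwards with x
      exact trunc_tendsto (f x)
  exact tendsto_nhds_unique (lim1.congr (fun n => key n)) lim2

variable {μ' : Measure ℝ} {f : ℝ → ℝ}

lemma meas_Ici_measurable : Measurable fun t => (μ' (Ici t)).toReal := by
  apply Measurable.ennreal_toReal
  exact Antitone.measurable (fun s t hst => measure_mono (Ici_subset_Ici.mpr hst))

lemma g_measurable (c : ℝ) :
    Measurable fun t => if 0 ≤ t then (μ' (Ici t)).toReal / c else 0 :=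
  Measurable.ite measurableSet_Ici (meas_Ici_measurable.div_const c) measurable_const

lemma ae_nonneg_of_Iio_eq_zero (hμ'0 : μ' (Set.Iio 0) = 0) : ∀ᵐ x ∂μ', 0 ≤ x := by
  rw [ae_iff]
  simp only [not_le]
  exact hμ'0

lemma lintegral_tail (hμ'0 : μ' (Set.Iio 0) = 0) (hμ'int : Integrable id μ') :
    ∫⁻ t in Ici (0:ℝ), μ' (Ici t) = ENNReal.ofReal (∫ y, y ∂μ') := by
  have hnn : 0 ≤ᵐ[μ'] id := ae_nonneg_of_Iio_eq_zero hμ'0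
  calc ∫⁻ t in Ici (0:ℝ), μ' (Ici t)
      = ∫⁻ t in Ioi (0:ℝ), μ' (Ici t) := (setLIntegral_congr Ioi_ae_eq_Ici).symm
    _ = ∫⁻ t in Ioi (0:ℝ), μ' {a | t ≤ a} := rfl
    _ = ∫⁻ ω, ENNReal.ofReal (id ω) ∂μ' :=
        (lintegral_eq_lintegral_meas_le μ' hnn hμ'int.aemeasurable).symm
    _ = ENNReal.ofReal (∫ y, y ∂μ') := (ofReal_integral_eq_lintegral_ofReal hμ'int hnn).symm

lemma eta_integral (c : ℝ) (hc : 0 < c) (h : ℝ → ℝ) :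
    ∫ t, h t ∂(volume.withDensity fun x =>
        ENNReal.ofReal (if 0 ≤ x then (μ' (Ici x)).toReal / c else 0))
      = ∫ t, (if 0 ≤ t then (μ' (Ici t)).toReal / c else 0) * h t := by
  have hg : Measurable fun t => Real.toNNReal (if 0 ≤ t then (μ' (Ici t)).toReal / c else 0) :=
    (g_measurable c).real_toNNReal
  have := integral_withDensity_eq_integral_smul (μ := (volume : Measure ℝ)) hg h
  rw [show (fun x => ENNReal.ofReal (if 0 ≤ x then (μ' (Ici x)).toReal / c else 0))
      = fun x => ((Real.toNNReal (if 0 ≤ x then (μ' (Ici x)).toReal / c else 0) : ℝ≥0) : ℝ≥0∞)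
      from rfl, this]
  congr 1
  funext t
  have hnn : (0:ℝ) ≤ if 0 ≤ t then (μ' (Ici t)).toReal / c else 0 := by
    split_ifs
    · positivity
    · exact le_rfl
  rw [NNReal.smul_def, Real.coe_toNNReal _ hnn, smul_eq_mul]

lemma eta_prob [IsProbabilityMeasure μ'] (hμ'0 : μ' (Set.Iio 0) = 0) (hμ'int : Integrable id μ')
    (hc : 0 < ∫ y, y ∂μ') :
    IsProbabilityMeasure (volume.withDensity fun x =>
      ENNReal.ofReal (if 0 ≤ x then (μ' (Ici x)).toReal / ∫ y, y ∂μ' else 0)) := by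
  set c := ∫ y, y ∂μ' with hcdef
  constructor
  rw [withDensity_apply _ MeasurableSet.univ, Measure.restrict_univ]
  have e1 : (fun x => ENNReal.ofReal (if 0 ≤ x then (μ' (Ici x)).toReal / c else 0))
      = Set.indicator (Ici (0:ℝ)) (fun x => μ' (Ici x) / ENNReal.ofReal c) := by
    funext x
    rcases le_or_gt 0 x with hx | hx
    · simp only [Set.indicator_apply, mem_Ici, if_pos hx]
      rw [ENNReal.ofReal_div_of_pos hc, ENNReal.ofReal_toReal (measure_ne_top _ _)]
    · simp only [Set.indicator_apply, mem_Ici, if_neg (not_le.mpr hx), ENNReal.ofReal_zero]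
  have e1' : ∫⁻ x, ENNReal.ofReal (if 0 ≤ x then (μ' (Ici x)).toReal / c else 0) ∂volume
      = ∫⁻ x in Ici (0:ℝ), μ' (Ici x) / ENNReal.ofReal c := by
    rw [← lintegral_indicator measurableSet_Ici _]
    exact lintegral_congr fun x => congrFun e1 x
  rw [e1']
  have e2 : ∫⁻ x in Ici (0:ℝ), μ' (Ici x) / ENNReal.ofReal c
      = (∫⁻ x in Ici (0:ℝ), μ' (Ici x)) * (ENNReal.ofReal c)⁻¹ := by
    simp_rw [div_eq_mul_inv]
    exact lintegral_mul_const' _ _ (ENNReal.inv_ne_top.mpr (ENNReal.ofReal_pos.mpr hc).ne')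
  rw [e2, lintegral_tail hμ'0 hμ'int, ← div_eq_mul_inv,
    ENNReal.div_self (ENNReal.ofReal_pos.mpr hc).ne' ENNReal.ofReal_ne_top]

lemma deriv_shift_measurable (x : ℝ) : Measurable fun t => deriv f (x + t) :=
  (measurable_deriv f).comp (measurable_const_add x)

lemma ftc_shift (hf : Differentiable ℝ f) (hd : ∀ z, |deriv f z| ≤ 1) (x : ℝ) {y : ℝ}
    (hy : 0 ≤ y) : f (x + y) - f x = ∫ t, (Ioc (0:ℝ) y).indicator (fun t => deriv f (x + t)) t := by
  have hderiv : ∀ t ∈ uIcc (0:ℝ) y, HasDerivAt (fun t => f (x + t)) (deriv f (x + t)) t := by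
    intro t _
    simpa [Function.comp_def] using (hf (x + t)).hasDerivAt.comp t ((hasDerivAt_id t).const_add x)
  have hii : IntervalIntegrable (fun t => deriv f (x + t)) volume 0 y := by
    apply IntervalIntegrable.mono_fun (intervalIntegrable_const (c := (1:ℝ)))
      (deriv_shift_measurable x).aestronglyMeasurable
    filter_upwards with t
    simpa [Real.norm_eq_abs] using hd (x + t)
  have h := intervalIntegral.integral_eq_sub_of_hasDerivAt hderiv hii
  rw [intervalIntegral.integral_of_le hy, ← integral_indicator measurableSet_Ioc] at h
  simp only [add_zero] at h
  rw [← h]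

lemma G_integrable [IsFiniteMeasure μ'] (hd : ∀ z, |deriv f z| ≤ 1)
    (hμ'int : Integrable id μ') (x : ℝ) :
    Integrable (fun p : ℝ × ℝ => (Ioc (0:ℝ) p.1).indicator (fun t => deriv f (x + t)) p.2)
      (μ'.prod volume) := by
  set S : Set (ℝ × ℝ) := {p | 0 < p.2 ∧ p.2 ≤ p.1} with hSdef
  have hS : MeasurableSet S :=
    (measurableSet_lt measurable_const measurable_snd).inter
      (measurableSet_le measurable_snd measurable_fst)
  have hF : Measurable fun p : ℝ × ℝ => deriv f (x + p.2) :=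
    (measurable_deriv f).comp (measurable_snd.const_add x)
  have heq : (fun p : ℝ × ℝ => (Ioc (0:ℝ) p.1).indicator (fun t => deriv f (x + t)) p.2)
      = S.indicator (fun p : ℝ × ℝ => deriv f (x + p.2)) := by
    funext p
    simp only [Set.indicator_apply, mem_Ioc, hSdef, Set.mem_setOf_eq]
  have hSfin : (μ'.prod volume) S < ∞ := by
    rw [Measure.prod_apply hS]
    have e : ∀ y : ℝ, (Prod.mk y ⁻¹' S) = Ioc (0:ℝ) y := fun y => rfl
    calc ∫⁻ y, volume (Prod.mk y ⁻¹' S) ∂μ' = ∫⁻ y, ENNReal.ofReal y ∂μ' := by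
          simp only [e, Real.volume_Ioc, sub_zero]
      _ ≤ ∫⁻ y, ‖y‖₊ ∂μ' := lintegral_mono fun y => by
          rw [← ENNReal.ofReal_coe_nnreal, coe_nnnorm]
          exact ENNReal.ofReal_le_ofReal (le_abs_self y)
      _ < ∞ := hμ'int.2
  have hdom : Integrable (S.indicator fun _ => (1:ℝ)) (μ'.prod volume) :=
    (integrable_indicator_iff hS).mpr ((integrableOn_const_iff (C := (1:ℝ))).mpr (Or.inr hSfin))
  rw [heq]
  apply hdom.mono' (hF.indicator hS).aestronglyMeasurable
  filter_upwards with p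
  rw [Real.norm_eq_abs]
  by_cases hp : p ∈ S
  · simp only [Set.indicator_of_mem hp]
    exact hd _
  · simp [Set.indicator_of_notMem hp]

lemma fubini_inner [IsProbabilityMeasure μ'] (hf : Differentiable ℝ f)
    (hd : ∀ z, |deriv f z| ≤ 1)
    (hμ'0 : μ' (Set.Iio 0) = 0) (hμ'int : Integrable id μ') (x : ℝ) :
    ∫ y, (f (x + y) - f x) ∂μ'
      = ∫ t, (if 0 < t then (μ' (Ici t)).toReal * deriv f (x + t) else 0) := by
  have hae : ∀ᵐ y ∂μ', 0 ≤ y := ae_nonneg_of_Iio_eq_zero hμ'0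
  have step1 : ∫ y, (f (x + y) - f x) ∂μ'
      = ∫ y, (∫ t, (Ioc (0:ℝ) y).indicator (fun t => deriv f (x + t)) t) ∂μ' := by
    apply integral_congr_ae
    filter_upwards [hae] with y hy
    exact ftc_shift hf hd x hy
  have swap := integral_integral_swap
    (f := fun y t => (Ioc (0:ℝ) y).indicator (fun t => deriv f (x + t)) t)
    (G_integrable hd hμ'int x)
  rw [step1, swap]
  apply integral_congr_ae
  filter_upwards with t
  rcases lt_or_ge 0 t with ht | ht
  · have e : (fun y => (Ioc (0:ℝ) y).indicator (fun t => deriv f (x + t)) t)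
        = (Ici t).indicator (fun _ => deriv f (x + t)) := by
      funext y
      simp only [Set.indicator_apply, mem_Ioc, mem_Ici, ht, true_and]
    rw [e, if_pos ht, integral_indicator_const _ measurableSet_Ici, smul_eq_mul, measureReal_def]
  · have e : (fun y => (Ioc (0:ℝ) y).indicator (fun t => deriv f (x + t)) t)
        = fun _ => 0 := by
      funext y
      simp only [Set.indicator_apply, mem_Ioc]
      rw [if_neg]
      push_neg
      intro h
      exact absurd h (not_lt.mpr ht)
    rw [e, if_neg (not_lt.mpr ht), integral_zero]

end Aux

/-- If the size-biased distribution of a nonnegative `X` equals the law of `X + X'` with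
`X'` nonnegative and independent of `X`, then the zero-biased distribution of `X` equals
the law of `X + X''` where `X''` is independent of `X` with density
`x ↦ P(X' ≥ x)/E[X']` on `[0,∞)`. -/
theorem zeroBiased_of_sizeBiased_conv (μ μ' : Measure ℝ)
    [IsProbabilityMeasure μ] [IsProbabilityMeasure μ']
    (hμ0 : μ (Set.Iio 0) = 0) (hμ'0 : μ' (Set.Iio 0) = 0)
    (hL2 : MemLp id 2 μ) (hvar : 0 < ∫ x, (x - ∫ y, y ∂μ) ^ 2 ∂μ)
    (hμ'int : Integrable id μ') (hμ'mean : 0 < ∫ x, x ∂μ')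
    (hsb : IsSizeBiased μ (Measure.conv μ μ')) :
    IsZeroBiased μ
      (Measure.conv μ (volume.withDensity fun x =>
        ENNReal.ofReal (if 0 ≤ x then (μ' (Set.Ici x)).toReal / ∫ y, y ∂μ' else 0))) := by
  intro f hfd hd'
  set c := ∫ y, y ∂μ' with hcdef
  set m := ∫ y, y ∂μ with hmdef
  set η := (volume.withDensity fun x =>
      ENNReal.ofReal (if 0 ≤ x then (μ' (Set.Ici x)).toReal / c else 0)) with hηdef
  haveI hηp : IsProbabilityMeasure η := by
    rw [hηdef, hcdef]
    exact eta_prob hμ'0 hμ'int hμ'mean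
  have hc0 : 0 < c := hμ'mean
  have hmf : Measurable f := hfd.continuous.measurable
  have hdm : Measurable (deriv f) := measurable_deriv f
  have hμae : ∀ᵐ x ∂μ, 0 ≤ x := ae_nonneg_of_Iio_eq_zero hμ0
  have hidμ : Integrable (fun x : ℝ => x) μ := hL2.integrable one_le_two
  have hsqμ : Integrable (fun x : ℝ => x ^ 2) μ := by
    have := hL2.integrable_sq
    simpa using this
  have hsum : Integrable (fun p : ℝ × ℝ => p.1 + p.2) (μ.prod μ') := by
    exact (integrable_comp_fst (f := fun x : ℝ => x) hidμ.aestronglyMeasurable hidμ).add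
      (integrable_comp_snd (f := fun x : ℝ => x) hμ'int.aestronglyMeasurable hμ'int)
  have hidconv : Integrable (fun x : ℝ => x) (μ.conv μ') := integrable_conv' measurable_id hsum
  have hconvae : ∀ᵐ z ∂(μ.conv μ'), 0 ≤ z := by
    apply ae_nonneg_of_Iio_eq_zero
    rw [Measure.conv, Measure.map_apply measurable_add measurableSet_Iio]
    have hsub : (fun p : ℝ × ℝ => p.1 + p.2) ⁻¹' Set.Iio 0
        ⊆ (Set.Iio 0 ×ˢ Set.univ) ∪ (Set.univ ×ˢ Set.Iio 0) := by
      rintro ⟨x, y⟩ hxy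
      simp only [Set.mem_preimage, Set.mem_Iio] at hxy
      by_contra h
      simp only [Set.mem_union, Set.mem_prod, Set.mem_Iio, Set.mem_univ, and_true, true_and,
        not_or, not_lt] at h
      linarith [h.1, h.2]
    refine le_antisymm (le_trans (measure_mono hsub) ?_) zero_le
    refine le_trans (measure_union_le _ _) ?_
    rw [Measure.prod_prod, Measure.prod_prod, hμ0, hμ'0]
    simp
  have hconvmean : ∫ x, x ∂(μ.conv μ') = m + c := by
    have h1 := integral_conv (μ := μ) (ν := μ') (f := fun x : ℝ => x) measurable_id hsum
    rw [h1]
    have inner : ∀ x : ℝ, ∫ y, (x + y) ∂μ' = x + c := by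
      intro x
      have h2 := integral_add (μ := μ') (integrable_const x) hμ'int
      simpa [hcdef] using h2
    simp only [inner]
    rw [integral_add hidμ (integrable_const c)]
    simp [hmdef]
  -- second moment
  have hmax_meas : Measurable fun x : ℝ => max x 0 := measurable_id.max measurable_const
  have hmax_abs : ∀ x : ℝ, |max x 0| ≤ |x| := fun x => by
    rw [abs_of_nonneg (le_max_right x 0)]
    exact max_le (le_abs_self x) (abs_nonneg x)
  have h1 : Integrable (fun x => x * max x 0) μ := by
    apply hsqμ.mono' (measurable_id.mul hmax_meas).aestronglyMeasurable
    filter_upwards with x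
    rw [Real.norm_eq_abs, Pi.mul_apply, id_eq, abs_mul]
    calc |x| * |max x 0| ≤ |x| * |x| := mul_le_mul_of_nonneg_left (hmax_abs x) (abs_nonneg x)
      _ = x ^ 2 := by rw [← sq_abs]; ring
  have h2 : Integrable (fun x : ℝ => max x 0) (μ.conv μ') := by
    apply hidconv.abs.mono' hmax_meas.aestronglyMeasurable
    filter_upwards with x
    rw [Real.norm_eq_abs]
    exact hmax_abs x
  have key := sizeBiased_ext hsb hmax_meas h1 h2
  have keyL : ∫ x, x * max x 0 ∂μ = ∫ x, x ^ 2 ∂μ := by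
    apply integral_congr_ae
    filter_upwards [hμae] with x hx
    rw [max_eq_left hx]
    ring
  have keyR : ∫ x, max x 0 ∂(μ.conv μ') = m + c := by
    rw [← hconvmean]
    apply integral_congr_ae
    filter_upwards [hconvae] with x hx
    exact max_eq_left hx
  have hmoment : ∫ x, x ^ 2 ∂μ = m * (m + c) := by
    rw [← keyL, key, keyR]
  have hvar_eq : ∫ x, (x - m) ^ 2 ∂μ = m * c := by
    have expand : (fun x : ℝ => (x - m)^2) = fun x => x^2 - 2*m*x + m^2 := by
      funext x; ring
    calc ∫ x, (x - m)^2 ∂μ = ∫ x, (x^2 - 2*m*x + m^2) ∂μ := by rw [expand]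
      _ = (∫ x, (x^2 - 2*m*x) ∂μ) + ∫ _x, (m^2:ℝ) ∂μ :=
          integral_add (hsqμ.sub (hidμ.const_mul (2*m))) (integrable_const _)
      _ = ((∫ x, x^2 ∂μ) - ∫ x, 2*m*x ∂μ) + m^2 := by
          rw [integral_sub hsqμ (hidμ.const_mul (2*m)), integral_const]
          simp
      _ = (m*(m+c) - 2*m*m) + m^2 := by
          rw [hmoment, integral_const_mul]
      _ = m * c := by ring
  -- Lipschitz bound
  have hlip : ∀ z w : ℝ, |f z - f w| ≤ |z - w| := by
    have lip : LipschitzWith 1 f := lipschitzWith_of_nnnorm_deriv_le hfd (fun x => by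
      rw [← NNReal.coe_le_coe, coe_nnnorm, NNReal.coe_one, Real.norm_eq_abs]
      exact hd' x)
    intro z w
    have := lip.dist_le_mul z w
    simpa [Real.dist_eq] using this
  have hfb : ∀ z : ℝ, |f z| ≤ |f 0| + |z| := fun z => by
    have h := hlip z 0
    have h2 := abs_sub_abs_le_abs_sub (f z) (f 0)
    simp only [sub_zero] at h
    linarith
  -- integrability facts for f
  have hIf : Integrable f μ := by
    apply ((integrable_const |f 0|).add hidμ.abs).mono' hmf.aestronglyMeasurable
    filter_upwards with x
    rw [Real.norm_eq_abs]
    exact hfb x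
  have hIxf : Integrable (fun x => x * f x) μ := by
    apply ((hidμ.abs.const_mul |f 0|).add hsqμ).mono'
      (measurable_id.mul hmf).aestronglyMeasurable
    filter_upwards with x
    rw [Real.norm_eq_abs, Pi.mul_apply, id_eq, abs_mul]
    have hb := mul_le_mul_of_nonneg_left (hfb x) (abs_nonneg x)
    have h3 : |x| * |x| = x ^ 2 := by rw [← sq_abs]; ring
    simp only [Pi.add_apply, id_eq]
    nlinarith [abs_nonneg x, abs_nonneg (f 0)]
  have hIfconv : Integrable f (μ.conv μ') := by
    apply ((integrable_const |f 0|).add hidconv.abs).mono' hmf.aestronglyMeasurable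
    filter_upwards with x
    rw [Real.norm_eq_abs]
    exact hfb x
  have hI4 : Integrable (fun p : ℝ × ℝ => f (p.1 + p.2)) (μ.prod μ') := by
    apply (((integrable_const |f 0|).add
        (integrable_comp_fst (f := fun x : ℝ => |x|) hidμ.abs.aestronglyMeasurable
          hidμ.abs)).add
        (integrable_comp_snd (f := fun x : ℝ => |x|) hμ'int.abs.aestronglyMeasurable
          hμ'int.abs)).mono' (hmf.comp measurable_add).aestronglyMeasurable
    filter_upwards with p
    rw [Real.norm_eq_abs]
    have := hfb (p.1 + p.2)
    have h2 := abs_add_le p.1 p.2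
    simp only [Pi.add_apply, id_eq, Function.comp_apply]
    linarith
  have hI5 : Integrable (fun p : ℝ × ℝ => f p.1) (μ.prod μ') :=
    integrable_comp_fst hmf.aestronglyMeasurable hIf
  have hxf : ∫ x, x * f x ∂μ = m * ∫ x, f x ∂(μ.conv μ') := sizeBiased_ext hsb hmf hIxf hIfconv
  have lhs_eq : ∫ x, (x - m) * f x ∂μ = (∫ x, x * f x ∂μ) - m * ∫ x, f x ∂μ := by
    have e : (fun x => (x - m) * f x) = fun x => x * f x - m * f x := by funext x; ring
    rw [e, integral_sub hIxf (hIf.const_mul m), integral_const_mul]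
  have hconv_int : ∫ x, f x ∂(μ.conv μ') = ∫ p, f (p.1 + p.2) ∂(μ.prod μ') := by
    rw [Measure.conv, integral_map measurable_add.aemeasurable hmf.aestronglyMeasurable]
  have hμ_int : ∫ x, f x ∂μ = ∫ p, f p.1 ∂(μ.prod μ') := by
    have hh : Measure.map Prod.fst (μ.prod μ') = μ := by
      rw [← Measure.fst]; exact Measure.fst_prod
    conv_lhs => rw [← hh]
    rw [integral_map measurable_fst.aemeasurable (by rw [hh]; exact hmf.aestronglyMeasurable)]
  have diff_eq : ∫ x, f x ∂(μ.conv μ') - ∫ x, f x ∂μ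
      = ∫ x, ∫ y, (f (x + y) - f x) ∂μ' ∂μ := by
    rw [hconv_int, hμ_int, ← integral_sub hI4 hI5]
    exact integral_prod _ (hI4.sub hI5)
  have inner1 : ∀ x : ℝ, ∫ y, (f (x + y) - f x) ∂μ'
      = ∫ t, (if 0 < t then (μ' (Set.Ici t)).toReal * deriv f (x + t) else 0) :=
    fun x => fubini_inner hfd hd' hμ'0 hμ'int x
  have inner2 : ∀ x : ℝ, ∫ t, (if 0 < t then (μ' (Set.Ici t)).toReal * deriv f (x + t) else 0)
      = c * ∫ t, deriv f (x + t) ∂η := by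
    intro x
    rw [hηdef, eta_integral c hc0 (fun t => deriv f (x + t)), ← integral_const_mul]
    apply integral_congr_ae
    rw [Filter.EventuallyEq, ae_iff]
    apply measure_mono_null _ (volume_singleton (a := (0:ℝ)))
    intro t ht
    simp only [Set.mem_setOf_eq] at ht
    simp only [Set.mem_singleton_iff]
    by_contra h0
    apply ht
    rcases lt_trichotomy t 0 with h | h | h
    · rw [if_neg (not_lt.mpr h.le), if_neg (not_le.mpr h)]
      ring
    · exact absurd h h0
    · rw [if_pos h, if_pos h.le]
      field_simp
  have hder_int : Integrable (fun p : ℝ × ℝ => deriv f (p.1 + p.2)) (μ.prod η) :=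
    bdd_integrable ((hdm.comp measurable_add).aestronglyMeasurable) (fun p => hd' _)
  have hRHS : ∫ z, deriv f z ∂(μ.conv η) = ∫ x, ∫ t, deriv f (x + t) ∂η ∂μ :=
    integral_conv hdm hder_int
  calc ∫ x, (x - m) * f x ∂μ
      = m * ∫ x, f x ∂(μ.conv μ') - m * ∫ x, f x ∂μ := by rw [lhs_eq, hxf]
    _ = m * (∫ x, f x ∂(μ.conv μ') - ∫ x, f x ∂μ) := by ring
    _ = m * ∫ x, ∫ y, (f (x + y) - f x) ∂μ' ∂μ := by rw [diff_eq]
    _ = m * ∫ x, c * ∫ t, deriv f (x + t) ∂η ∂μ := by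
        congr 1
        apply integral_congr_ae
        filter_upwards with x
        rw [inner1 x, inner2 x]
    _ = m * (c * ∫ x, ∫ t, deriv f (x + t) ∂η ∂μ) := by rw [integral_const_mul]
    _ = (m * c) * ∫ x, ∫ t, deriv f (x + t) ∂η ∂μ := by ring
    _ = (∫ x, (x - m) ^ 2 ∂μ) * ∫ z, deriv f z ∂(μ.conv η) := by rw [hvar_eq, hRHS]
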